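/- Let c₁ > 0, q > 1, b₀ ≥ 0, and let g : [0,∞) → [0,∞) be continuous and nondecreasing with g(v) > 0 for v > 0, satisfying g(w) ≤ c₁·(w/v)^(q−1)·g(v) for all w ≥ v > 0 with v ≥ b₀. Define 𝒢(w) := ∫₀^w g(v) dv. Then 𝒢(w) ≥ ((1 − 2^(−q))/(c₁·q))·g(w)·w for all w ≥ 2(1 + b₀). -/

import Mathlib

open intervalIntegral

/-- Under the growth condition (g₁): `g(w) ≤ c₁·(w/v)^(q−1)·g(v)` for all `w ≥ v ≥ b₀`
(`v > 0`), the primitive `𝒢(w) = ∫₀^w g(v) dv` satisfies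
`𝒢(w) ≥ ((1 − 2^(−q))/(c₁·q))·g(w)·w` for all `w ≥ 2(1 + b₀)`. -/
theorem primitive_lower_bound
    (c₁ q b₀ : ℝ) (hc₁ : 0 < c₁) (hq : 1 < q) (hb₀ : 0 ≤ b₀)
    (g : ℝ → ℝ)
    (hg_cont : ContinuousOn g (Set.Ici 0))
    (hg_nonneg : ∀ v, 0 ≤ v → 0 ≤ g v)
    (hg_mono : MonotoneOn g (Set.Ici 0))
    (hg_pos : ∀ v, 0 < v → 0 < g v)
    (hg1 : ∀ v w : ℝ, 0 < v → b₀ ≤ v → v ≤ w → g w ≤ c₁ * (w / v) ^ (q - 1) * g v) :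
    ∀ w : ℝ, 2 * (1 + b₀) ≤ w →
      ((1 - 2 ^ (-q)) / (c₁ * q)) * (g w * w) ≤ ∫ v in (0:ℝ)..w, g v := by
  intro w hw
  have hw0 : (0:ℝ) < w := by nlinarith
  have hhalf : (0:ℝ) < w / 2 := by linarith
  have hble : b₀ ≤ w / 2 := by linarith
  have hqpos : (0:ℝ) < q := by linarith
  have hq1 : (0:ℝ) ≤ q - 1 := by linarith
  have hwq1 : (0:ℝ) < w ^ (q - 1) := Real.rpow_pos_of_pos hw0 _
  -- integrability of g on subintervals of [0, ∞)
  have hint : ∀ a b : ℝ, 0 ≤ a → 0 ≤ b → IntervalIntegrable g MeasureTheory.volume a b := by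
    intro a b ha hb
    apply ContinuousOn.intervalIntegrable
    apply hg_cont.mono
    intro x hx
    rcases Set.mem_uIcc.mp hx with h | h
    · exact le_trans ha h.1
    · exact le_trans hb h.1
  -- the comparison function
  set f : ℝ → ℝ := fun v => g w / c₁ * (v / w) ^ (q - 1) with hf
  have hfint : IntervalIntegrable f MeasureTheory.volume (w / 2) w := by
    apply ContinuousOn.intervalIntegrable
    apply ContinuousOn.mul continuousOn_const
    apply ContinuousOn.rpow_const
    · exact (continuousOn_id.div_const w)
    · intro x _
      exact Or.inr hq1
  -- pointwise bound on [w/2, w]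
  have hpt : ∀ v ∈ Set.Icc (w / 2) w, f v ≤ g v := by
    intro v hv
    have hv0 : 0 < v := lt_of_lt_of_le hhalf hv.1
    have hA : 0 < (v / w) ^ (q - 1) := Real.rpow_pos_of_pos (div_pos hv0 hw0) _
    have h := hg1 v w hv0 (le_trans hble hv.1) hv.2
    have hinv : (w / v) ^ (q - 1) = ((v / w) ^ (q - 1))⁻¹ := by
      rw [← Real.inv_rpow (le_of_lt (div_pos hv0 hw0)), inv_div]
    rw [hinv] at h
    rw [show c₁ * ((v / w) ^ (q - 1))⁻¹ * g v = c₁ * g v / ((v / w) ^ (q - 1)) by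
      field_simp] at h
    have h2 : g w * ((v / w) ^ (q - 1)) ≤ c₁ * g v := (le_div_iff₀ hA).mp h
    simp only [hf]
    rw [div_mul_eq_mul_div, div_le_iff₀ hc₁]
    linarith [h2]
  have hle : w / 2 ≤ w := by linarith
  -- lower bound on the upper half integral
  have hmono : (∫ v in (w/2)..w, f v) ≤ ∫ v in (w/2)..w, g v :=
    intervalIntegral.integral_mono_on hle hfint (hint _ _ (le_of_lt hhalf) (le_of_lt hw0)) hpt
  -- compute the integral of f
  have hcongr : Set.EqOn (fun v => (v / w) ^ (q - 1)) (fun v => v ^ (q - 1) * (w ^ (q - 1))⁻¹)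
      (Set.uIcc (w/2) w) := by
    intro x hx
    rw [Set.uIcc_of_le hle] at hx
    have hx0 : 0 ≤ x := le_trans (le_of_lt hhalf) hx.1
    simp only
    rw [Real.div_rpow hx0 (le_of_lt hw0), div_eq_mul_inv]
  have hcalc : (∫ v in (w/2)..w, f v)
      = g w / c₁ * ((w ^ q - (w/2) ^ q) / q * (w ^ (q - 1))⁻¹) := by
    simp only [hf]
    rw [intervalIntegral.integral_const_mul]
    congr 1
    rw [intervalIntegral.integral_congr hcongr, intervalIntegral.integral_mul_const,
      integral_rpow (Or.inl (by linarith))]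
    norm_num
  have h2q : (w/2) ^ q = w ^ q * 2 ^ (-q) := by
    rw [div_eq_mul_inv, Real.mul_rpow (le_of_lt hw0) (by norm_num),
      ← Real.rpow_neg_one, ← Real.rpow_mul (by norm_num : (0:ℝ) ≤ 2)]
    norm_num
  have hwq : w ^ q = w ^ (q - 1) * w := by
    nth_rewrite 1 [show q = (q - 1) + 1 by ring]
    rw [Real.rpow_add hw0, Real.rpow_one]
  have hkey : ((1 - 2 ^ (-q)) / (c₁ * q)) * (g w * w)
      = g w / c₁ * ((w ^ q - (w/2) ^ q) / q * (w ^ (q - 1))⁻¹) := by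
    rw [h2q, hwq]
    field_simp
  -- assemble
  have hsplit : (∫ v in (0:ℝ)..w, g v) = (∫ v in (0:ℝ)..(w/2), g v) + ∫ v in (w/2)..w, g v :=
    (intervalIntegral.integral_add_adjacent_intervals
      (hint 0 (w/2) le_rfl (le_of_lt hhalf)) (hint (w/2) w (le_of_lt hhalf) (le_of_lt hw0))).symm
  have hlow : 0 ≤ ∫ v in (0:ℝ)..(w/2), g v := by
    apply intervalIntegral.integral_nonneg (le_of_lt hhalf)
    intro x hx
    exact hg_nonneg x hx.1
  rw [hsplit, hkey]
  linarith [hmono, hcalc ▸ hmono]
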